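/- For every rooted computation tree T (in which no node has exactly one child) and every integer n ≥ 0, the n-th potential of T in the rooted-tree steal model equals the n-th potential of its left-child right-sibling binary encoding in the binary-tree steal model: Φ_R(T, n) = Φ(LCRS(T), n). -/
import Mathlib


/-- A binary computation tree: a single node, or a root with two subtrees. -/
inductive BTree : Type
  | triv : BTree
  | node : BTree → BTree → BTree
  deriving DecidableEq

/-- A steal step on a multiset of binary computation trees: choose an arbitrary
tree `U` and a tree `node l r` from the multiset, and replace them by `l` and `r`. -/
def StealStep (S S' : Multiset BTree) : Prop :=
  ∃ (U l r : BTree) (S₀ : Multiset BTree),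
    S = U ::ₘ BTree.node l r ::ₘ S₀ ∧ S' = l ::ₘ r ::ₘ S₀

/-- `StealSeq n S` means there exists a sequence of `n` steal steps starting from `S`. -/
def StealSeq : ℕ → Multiset BTree → Prop
  | 0, _ => True
  | n + 1, S => ∃ S', StealStep S S' ∧ StealSeq n S'

/-- The maximum length of a sequence of steal steps starting from `S`. -/
noncomputable def steals (S : Multiset BTree) : ℕ :=
  sSup {n | StealSeq n S}

/-- The `n`-th potential of `T`: the maximum number of steals starting from a
configuration with one processor owning `T` and `n` processors with trivial trees. -/
noncomputable def Phi (T : BTree) (n : ℕ) : ℕ :=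
  steals (T ::ₘ Multiset.replicate n BTree.triv)



/-- A rooted tree: a root with a finite ordered list of children. -/
inductive RTree : Type
  | node : List RTree → RTree

/-- A rooted computation tree: no node has exactly one child. -/
inductive RTree.Valid : RTree → Prop
  | mk (cs : List RTree) (hlen : cs.length ≠ 1) (hc : ∀ c ∈ cs, RTree.Valid c) :
      RTree.Valid (RTree.node cs)

/-- A steal step on a multiset of rooted computation trees: choose an arbitrary tree `U`
and a tree whose root has children `cs ++ [c]` (at least two children); the stolen subtree
is the last child `c`, and the remainder is the root with the other children if there were
more than two, or the single other child if there were exactly two. -/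
def RStealStep (S S' : Multiset RTree) : Prop :=
  ∃ (U c : RTree) (cs : List RTree) (S₀ : Multiset RTree),
    S = U ::ₘ RTree.node (cs ++ [c]) ::ₘ S₀ ∧
      ((∃ a, cs = [a] ∧ S' = a ::ₘ c ::ₘ S₀) ∨
        (2 ≤ cs.length ∧ S' = RTree.node cs ::ₘ c ::ₘ S₀))

/-- `RStealSeq n S` means there exists a sequence of `n` steal steps starting from `S`. -/
def RStealSeq : ℕ → Multiset RTree → Prop
  | 0, _ => True
  | n + 1, S => ∃ S', RStealStep S S' ∧ RStealSeq n S'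

/-- The maximum length of a sequence of steal steps starting from `S`. -/
noncomputable def stealsR (S : Multiset RTree) : ℕ :=
  sSup {n | RStealSeq n S}

/-- The `n`-th potential of a rooted computation tree `T`. -/
noncomputable def PhiR (T : RTree) (n : ℕ) : ℕ :=
  stealsR (T ::ₘ Multiset.replicate n (RTree.node []))

mutual
/-- The left-child right-sibling binary encoding of a rooted computation tree. -/
def LCRS : RTree → BTree
  | RTree.node [] => BTree.triv
  | RTree.node (c :: cs) => LCRSAux (LCRS c) cs

/-- `LCRSAux b cs` folds the encodings of the remaining children `cs` onto `b` from the left,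
so that `LCRS (node [c₁, …, c_m]) = node (LCRS (node [c₁, …, c_{m−1}]), LCRS c_m)` for `m ≥ 3`
and `LCRS (node [c₁, c₂]) = node (LCRS c₁, LCRS c₂)`. -/
def LCRSAux : BTree → List RTree → BTree
  | b, [] => b
  | b, c :: cs => LCRSAux (BTree.node b (LCRS c)) cs
end


noncomputable local instance : DecidableEq RTree := Classical.decEq _

lemma LCRSAux_append (b : BTree) (cs : List RTree) (c : RTree) :
    LCRSAux b (cs ++ [c]) = BTree.node (LCRSAux b cs) (LCRS c) := by
  induction cs generalizing b with
  | nil => simp [LCRSAux]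
  | cons a as ih => simp [LCRSAux, ih]

lemma LCRS_concat (cs : List RTree) (c : RTree) (h : cs ≠ []) :
    LCRS (RTree.node (cs ++ [c])) = BTree.node (LCRS (RTree.node cs)) (LCRS c) := by
  cases cs with
  | nil => exact absurd rfl h
  | cons a as => simp [LCRS, LCRSAux_append]

lemma LCRS_singleton (a : RTree) : LCRS (RTree.node [a]) = LCRS a := by
  simp [LCRS, LCRSAux]

lemma LCRS_pair (a c : RTree) :
    LCRS (RTree.node [a, c]) = BTree.node (LCRS a) (LCRS c) := by
  simp [LCRS, LCRSAux]

lemma RTree.Valid.children' {cs : List RTree} (h : (RTree.node cs).Valid) :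
    ∀ c ∈ cs, c.Valid := by cases h with | mk cs hlen hc => exact hc

lemma RTree.Valid.length' {cs : List RTree} (h : (RTree.node cs).Valid) :
    cs.length ≠ 1 := by cases h with | mk cs hlen hc => exact hlen

/-- Structure of a valid tree whose encoding is a node. -/
lemma LCRS_node_inv {T : RTree} (hT : T.Valid) {l r : BTree}
    (h : LCRS T = BTree.node l r) :
    ∃ cs c, T = RTree.node (cs ++ [c]) ∧ cs ≠ [] ∧
      l = LCRS (RTree.node cs) ∧ r = LCRS c := by
  obtain ⟨ds⟩ := T
  rcases eq_or_ne ds [] with rfl | hne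
  · simp [LCRS] at h
  · obtain ⟨cs, c, rfl⟩ : ∃ cs c, ds = cs ++ [c] :=
      ⟨ds.dropLast, ds.getLast hne, (List.dropLast_append_getLast hne).symm⟩
    have hcs : cs ≠ [] := by
      rintro rfl
      exact hT.length' (by simp)
    rw [LCRS_concat cs c hcs] at h
    injection h with h1 h2
    exact ⟨cs, c, rfl, hcs, h1.symm, h2.symm⟩

/-- The remainder of a steal: for `cs = [a]` it is `a`, for `|cs| ≥ 2` it is `node cs`.
In both cases its encoding is `LCRS (node cs)`. -/
lemma rstep_forward {S S' : Multiset RTree} (hS : ∀ T ∈ S, T.Valid)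
    (h : RStealStep S S') :
    StealStep (S.map LCRS) (S'.map LCRS) ∧ ∀ T ∈ S', T.Valid := by
  obtain ⟨U, c, cs, S₀, hSeq, hcase⟩ := h
  have hmem : RTree.node (cs ++ [c]) ∈ S := by rw [hSeq]; simp
  have hval : (RTree.node (cs ++ [c])).Valid := hS _ hmem
  have hc : c.Valid := hval.children' c (by simp)
  have hS₀ : ∀ T ∈ S₀, T.Valid := fun T hT => hS T (by rw [hSeq]; simp [hT])
  have hU : U.Valid := hS U (by rw [hSeq]; simp)
  rcases hcase with ⟨a, rfl, rfl⟩ | ⟨h2, rfl⟩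
  · have ha : a.Valid := hval.children' a (by simp)
    constructor
    · refine ⟨LCRS U, LCRS a, LCRS c, S₀.map LCRS, ?_, ?_⟩
      · rw [hSeq]; simp [LCRS_pair]
      · simp
    · intro T hT
      simp only [Multiset.mem_cons] at hT
      rcases hT with rfl | rfl | hT
      · exact ha
      · exact hc
      · exact hS₀ T hT
  · have hcs : cs ≠ [] := by rintro rfl; simp at h2
    have hrv : (RTree.node cs).Valid := by
      refine RTree.Valid.mk cs (by omega) ?_
      intro x hx; exact hval.children' x (by simp [hx])
    constructor
    · refine ⟨LCRS U, LCRS (RTree.node cs), LCRS c, S₀.map LCRS, ?_, ?_⟩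
      · rw [hSeq]; simp [LCRS_concat cs c hcs]
      · simp
    · intro T hT
      simp only [Multiset.mem_cons] at hT
      rcases hT with rfl | rfl | hT
      · exact hrv
      · exact hc
      · exact hS₀ T hT

lemma rstep_backward {S : Multiset RTree} {S'' : Multiset BTree}
    (hS : ∀ T ∈ S, T.Valid) (h : StealStep (S.map LCRS) S'') :
    ∃ S', RStealStep S S' ∧ S'.map LCRS = S'' ∧ ∀ T ∈ S', T.Valid := by
  obtain ⟨U, l, r, S₀, h1, h2⟩ := h
  obtain ⟨u, hu, huU, hrest⟩ := (Multiset.map_eq_cons LCRS S _ U).mpr h1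
  obtain ⟨t, ht, htn, hrest2⟩ :=
    (Multiset.map_eq_cons LCRS (S.erase u) _ (BTree.node l r)).mpr hrest
  have htS : t ∈ S := Multiset.mem_of_mem_erase ht
  have htv : t.Valid := hS t htS
  obtain ⟨cs, c, rfl, hcs, hl, hr⟩ := LCRS_node_inv htv htn
  set S₀' := (S.erase u).erase (RTree.node (cs ++ [c])) with hS₀'
  have hSdecomp : S = u ::ₘ RTree.node (cs ++ [c]) ::ₘ S₀' := by
    rw [hS₀', Multiset.cons_erase ht, Multiset.cons_erase hu]
  have hS₀v : ∀ T ∈ S₀', T.Valid := fun T hT =>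
    hS T (Multiset.mem_of_mem_erase (Multiset.mem_of_mem_erase hT))
  have hval := htv
  have hc : c.Valid := hval.children' c (by simp)
  cases cs with
  | nil => exact absurd rfl hcs
  | cons a cs' =>
    cases cs' with
    | nil =>
      refine ⟨a ::ₘ c ::ₘ S₀', ⟨u, c, [a], S₀', hSdecomp, Or.inl ⟨a, rfl, rfl⟩⟩, ?_, ?_⟩
      · simp [huU, h2, hrest2, hl, hr, LCRS_singleton, LCRS_pair]
      · intro T hT
        simp only [Multiset.mem_cons] at hT
        rcases hT with rfl | rfl | hT
        · exact hval.children' T (by simp)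
        · exact hc
        · exact hS₀v T hT
    | cons b cs'' =>
      refine ⟨RTree.node (a :: b :: cs'') ::ₘ c ::ₘ S₀',
        ⟨u, c, a :: b :: cs'', S₀', hSdecomp, Or.inr ⟨by simp, rfl⟩⟩, ?_, ?_⟩
      · simp [huU, h2, hrest2, hl, hr]
      · intro T hT
        simp only [Multiset.mem_cons] at hT
        rcases hT with rfl | rfl | hT
        · refine RTree.Valid.mk _ (by simp) ?_
          intro x hx
          have hx' : x ∈ (a :: b :: cs'') ++ [c] := List.mem_append_left _ hx
          exact hval.children' x (by simpa using hx')
        · exact hc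
        · exact hS₀v T hT

lemma rseq_iff (n : ℕ) : ∀ (S : Multiset RTree), (∀ T ∈ S, T.Valid) →
    (RStealSeq n S ↔ StealSeq n (S.map LCRS)) := by
  induction n with
  | zero => intro S hS; simp [RStealSeq, StealSeq]
  | succ n ih =>
    intro S hS
    constructor
    · rintro ⟨S', hstep, hseq⟩
      obtain ⟨hstep', hval'⟩ := rstep_forward hS hstep
      exact ⟨S'.map LCRS, hstep', (ih S' hval').mp hseq⟩
    · rintro ⟨S'', hstep, hseq⟩
      obtain ⟨S', hstep', hmap, hval'⟩ := rstep_backward hS hstep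
      exact ⟨S', hstep', (ih S' hval').mpr (hmap ▸ hseq)⟩

lemma stealsR_eq (S : Multiset RTree) (hS : ∀ T ∈ S, T.Valid) :
    stealsR S = steals (S.map LCRS) := by
  unfold stealsR steals
  congr 1
  ext n
  exact rseq_iff n S hS

theorem potential_eq_potential_LCRS (T : RTree) (hT : T.Valid) (n : ℕ) :
    PhiR T n = Phi (LCRS T) n := by
  have hval : ∀ X ∈ T ::ₘ Multiset.replicate n (RTree.node []), X.Valid := by
    intro X hX
    simp only [Multiset.mem_cons, Multiset.mem_replicate] at hX
    rcases hX with rfl | ⟨-, rfl⟩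
    · exact hT
    · exact RTree.Valid.mk [] (by simp) (by simp)
  have h := stealsR_eq _ hval
  unfold PhiR Phi
  rw [h]
  congr 1
  simp [LCRS]
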